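/- Let (R, 𝔪) be a local commutative ring and N a positively graded R-module of finite type (each graded piece finitely generated and only finitely many nonzero, or each piece finitely generated). If the tensor algebra T_R(N) is graded commutative, then N is zero or generated by a single element, i.e., N ≅ (R/𝔞)[n] for some ideal 𝔞 ⊆ 𝔪 and some n > 0. -/

import Mathlib

open TensorProduct

/-- The degree-`n` piece of the tensor algebra `T(N)` for the grading induced by a grading
`𝒩` on `N`: the span of the products `ι x₁ * ⋯ * ι xₖ` with `xⱼ` homogeneous of degrees
summing to `n`. -/
def gradePiece (R N : Type*) [CommRing R] [AddCommGroup N] [Module R N]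
    (𝒩 : ℕ → Submodule R N) (n : ℕ) : Submodule R (TensorAlgebra R N) :=
  Submodule.span R {w | ∃ l : List (N × ℕ), (∀ p ∈ l, p.1 ∈ 𝒩 p.2) ∧
    (l.map Prod.snd).sum = n ∧ w = (l.map fun p => TensorAlgebra.ι R p.1).prod}

/-- The tensor algebra `T(N)` on a graded module `(N, 𝒩)` is graded commutative:
`a * b = (-1)^(pq) • (b * a)` for homogeneous `a`, `b` of degrees `p`, `q`. -/
def TAGradedComm (R N : Type*) [CommRing R] [AddCommGroup N] [Module R N]
    (𝒩 : ℕ → Submodule R N) : Prop :=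
  ∀ p q : ℕ, ∀ a ∈ gradePiece R N 𝒩 p, ∀ b ∈ gradePiece R N 𝒩 q,
    a * b = ((-1 : R) ^ (p * q)) • (b * a)

theorem iota_rel {R N : Type*} [CommRing R] [AddCommGroup N] [Module R N]
    {𝒩 : ℕ → Submodule R N} (hcomm : TAGradedComm R N 𝒩) {p q : ℕ} {x y : N}
    (hx : x ∈ 𝒩 p) (hy : y ∈ 𝒩 q) :
    TensorAlgebra.ι R x * TensorAlgebra.ι R y
      = ((-1 : R) ^ (p * q)) • (TensorAlgebra.ι R y * TensorAlgebra.ι R x) := by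
  refine hcomm p q _ ?_ _ ?_
  · exact Submodule.subset_span ⟨[(x, p)], by simpa using hx, by simp, by simp⟩
  · exact Submodule.subset_span ⟨[(y, q)], by simpa using hy, by simp, by simp⟩

theorem func_rel {R N : Type*} [CommRing R] [AddCommGroup N] [Module R N]
    {𝒩 : ℕ → Submodule R N} (hcomm : TAGradedComm R N 𝒩)
    (κ : Type*) [CommRing κ] [Algebra R κ]
    {p q : ℕ} {x y : N} (hx : x ∈ 𝒩 p) (hy : y ∈ 𝒩 q) (f g : N →ₗ[R] κ) :
    f x * g y = algebraMap R κ ((-1 : R) ^ (p * q)) * (f y * g x) := by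
  classical
  let L : N →ₗ[R] Matrix (Fin 3) (Fin 3) κ :=
    { toFun := fun v => Matrix.single 0 1 (f v) + Matrix.single 1 2 (g v)
      map_add' := by
        intro a b
        simp [Matrix.single_add]
        abel
      map_smul' := by
        intro r a
        simp [← Matrix.smul_single, smul_add] }
  have h := congrArg (TensorAlgebra.lift R L) (iota_rel hcomm hx hy)
  rw [map_mul, map_smul, map_mul, TensorAlgebra.lift_ι_apply, TensorAlgebra.lift_ι_apply] at h
  have hL : ∀ u v : N, L u * L v = Matrix.single 0 2 (f u * g v) := by
    intro u v
    show ((Matrix.single (0 : Fin 3) (1 : Fin 3) (f u) + Matrix.single (1 : Fin 3) (2 : Fin 3) (g u)) *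
        (Matrix.single (0 : Fin 3) (1 : Fin 3) (f v) + Matrix.single (1 : Fin 3) (2 : Fin 3) (g v)) : Matrix (Fin 3) (Fin 3) κ) = _
    ext a b
    fin_cases a <;> fin_cases b <;>
      simp [Matrix.mul_apply, Matrix.single, Fin.sum_univ_three, Matrix.add_apply]
  rw [hL, hL] at h
  have h02 := congrFun (congrFun h 0) 2
  rw [Matrix.smul_apply, Matrix.single_apply_same, Matrix.single_apply_same,
    Algebra.smul_def] at h02
  exact h02

/-- Over a local ring `(R, 𝔪)`, if `N` is a positively graded module of finite type and
`T_R(N)` is graded commutative, then `N` is zero or cyclic, concentrated in a single degree: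
`N ≅ (R/𝔞)[n]` for some ideal `𝔞 ⊆ 𝔪` and some `n > 0`. -/
theorem cyclic_of_tensorAlgebra_gradedComm_local
    (R N : Type*) [CommRing R] [IsLocalRing R] [AddCommGroup N] [Module R N]
    [Module.Finite R N]
    (𝒩 : ℕ → Submodule R N) (hint : DirectSum.IsInternal 𝒩) (h0 : 𝒩 0 = ⊥)
    (hcomm : TAGradedComm R N 𝒩) :
    Subsingleton N ∨
      ∃ n : ℕ, 0 < n ∧ 𝒩 n = ⊤ ∧
        ∃ 𝔞 : Ideal R, 𝔞 ≤ IsLocalRing.maximalIdeal R ∧ Nonempty (N ≃ₗ[R] R ⧸ 𝔞) := by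
  classical
  set 𝔪 := IsLocalRing.maximalIdeal R with h𝔪def
  let κ := IsLocalRing.ResidueField R
  let V := κ ⊗[R] N
  let θ : N →ₗ[R] V := TensorProduct.mk R κ N 1
  have hjac : 𝔪 ≤ Ideal.jacobson ⊥ := (IsLocalRing.jacobson_eq_maximalIdeal ⊥ bot_ne_top).ge
  have hfg : (⊤ : Submodule R N).FG := Module.finite_def.mp ‹_›
  let e := TensorProduct.quotTensorEquivQuotSMul N 𝔪
  have hker : ∀ z : N, θ z = 0 ↔ z ∈ (𝔪 • ⊤ : Submodule R N) := by
    intro z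
    have he : e (θ z) = Submodule.Quotient.mk z := by
      show e ((1 : κ) ⊗ₜ[R] z) = _
      rw [show (1 : κ) = Ideal.Quotient.mk 𝔪 1 from rfl,
        TensorProduct.quotTensorEquivQuotSMul_mk_tmul, one_smul]
    rw [← Submodule.Quotient.mk_eq_zero, ← he]
    exact ⟨fun h => by rw [h]; exact map_zero e, fun h =>
      e.injective (h.trans (map_zero e).symm)⟩
  by_cases hex : ∃ n : ℕ, ∃ x ∈ 𝒩 n, θ x ≠ 0
  · right
    obtain ⟨p₀, x₀, hx₀mem, hx₀⟩ := hex
    -- every homogeneous image lies in the line through θ x₀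
    have hspan : ∀ n : ℕ, ∀ y ∈ 𝒩 n, θ y ∈ Submodule.span κ {θ x₀} := by
      intro n y hy
      by_contra hmem
      obtain ⟨ψ, hψy, hψmap⟩ := Submodule.exists_dual_map_eq_bot_of_notMem hmem inferInstance
      have hψx₀ : ψ (θ x₀) = 0 := by
        have : ψ (θ x₀) ∈ Submodule.map ψ (Submodule.span κ {θ x₀}) :=
          ⟨_, Submodule.mem_span_singleton_self _, rfl⟩
        rw [hψmap] at this
        exact (Submodule.mem_bot κ).mp this
      obtain ⟨φ, hφx₀, -⟩ :=
        Submodule.exists_dual_map_eq_bot_of_notMem (p := (⊥ : Submodule κ V))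
          (by simpa using hx₀) inferInstance
      have key := func_rel hcomm κ hx₀mem hy
        ((φ.restrictScalars R).comp θ) ((ψ.restrictScalars R).comp θ)
      simp only [LinearMap.comp_apply, LinearMap.coe_restrictScalars, hψx₀, mul_zero,
        MulZeroClass.mul_zero] at key
      exact absurd key (mul_ne_zero hφx₀ hψy)
    have hx0ne : x₀ ≠ 0 := fun h => hx₀ (by rw [h, map_zero])
    have hp₀ : 0 < p₀ := by
      rcases Nat.eq_zero_or_pos p₀ with h | h
      · exact absurd (by rw [h, h0] at hx₀mem; simpa using hx₀mem) hx0ne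
      · exact h
    have hC3 : ∀ y : N, θ y ∈ Submodule.span κ {θ x₀} →
        ∃ r : R, y - r • x₀ ∈ (𝔪 • ⊤ : Submodule R N) := by
      intro y hy
      obtain ⟨c, hc⟩ := Submodule.mem_span_singleton.mp hy
      obtain ⟨r, rfl⟩ := Ideal.Quotient.mk_surjective c
      refine ⟨r, ?_⟩
      rw [← hker, map_sub, map_smul, ← hc, ← algebraMap_smul κ r (θ x₀),
        show (algebraMap R κ) r = Ideal.Quotient.mk 𝔪 r from rfl, sub_self]
    have htople : ∀ (P : Submodule R N), (∀ r : R, r • x₀ ∈ P) →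
        (⊤ : Submodule R N) ≤ P ⊔ 𝔪 • ⊤ := by
      intro P hP
      have h1 : iSup 𝒩 ≤ P ⊔ 𝔪 • ⊤ := by
        refine iSup_le fun n => fun x hx => ?_
        obtain ⟨r, hr⟩ := hC3 x (hspan n x hx)
        have hdecomp : x = r • x₀ + (x - r • x₀) := by abel
        rw [hdecomp]
        exact Submodule.add_mem_sup (hP r) hr
      rwa [hint.submodule_iSup_eq_top] at h1
    have h𝒩top : 𝒩 p₀ = ⊤ := by
      refine top_le_iff.mp (Submodule.le_of_le_smul_of_le_jacobson_bot hfg hjac ?_)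
      exact htople _ fun r => Submodule.smul_mem _ r hx₀mem
    have hspantop : Submodule.span R {x₀} = ⊤ := by
      refine top_le_iff.mp (Submodule.le_of_le_smul_of_le_jacobson_bot hfg hjac ?_)
      exact htople _ fun r => Submodule.smul_mem _ r (Submodule.mem_span_singleton_self _)
    have hsurj : Function.Surjective (LinearMap.toSpanSingleton R N x₀) := by
      rw [← LinearMap.range_eq_top, ← LinearMap.span_singleton_eq_range, hspantop]
    refine ⟨p₀, hp₀, h𝒩top, LinearMap.ker (LinearMap.toSpanSingleton R N x₀), ?_,
      ⟨(LinearMap.quotKerEquivOfSurjective _ hsurj).symm⟩⟩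
    intro r hr
    by_contra hrm
    have hru : IsUnit r := by
      rwa [IsLocalRing.mem_maximalIdeal, mem_nonunits_iff, not_not] at hrm
    have : r • x₀ = 0 := hr
    exact hx0ne ((hru.smul_eq_zero).mp this)
  · left
    push_neg at hex
    have hle : (⊤ : Submodule R N) ≤ 𝔪 • ⊤ := by
      have hker' : (⊤ : Submodule R N) ≤ LinearMap.ker θ := by
        rw [← hint.submodule_iSup_eq_top]
        exact iSup_le fun n x hx => hex n x hx
      intro z hz
      exact (hker z).mp (hker' hz)
    have hbot : (⊤ : Submodule R N) = ⊥ :=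
      Submodule.eq_bot_of_le_smul_of_le_jacobson_bot 𝔪 ⊤ hfg hle hjac
    refine ⟨fun a b => ?_⟩
    have ha : a ∈ (⊥ : Submodule R N) := hbot ▸ Submodule.mem_top
    have hb : b ∈ (⊥ : Submodule R N) := hbot ▸ Submodule.mem_top
    rw [Submodule.mem_bot] at ha hb
    rw [ha, hb]
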